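/- The standard Gaussian upper quantile satisfies z_{1−α} = √(−2 ln α − ln|ln α| − ln(4π)) · (1 + O(ln|ln α| / (ln α)²)) as α → 0⁺. -/

import Mathlib

open Filter Set

/-- The standard normal cumulative distribution function. -/
noncomputable def Phi (z : ℝ) : ℝ :=
  ∫ t in Set.Iic z, (Real.sqrt (2 * Real.pi))⁻¹ * Real.exp (-t ^ 2 / 2)

open Filter Set MeasureTheory Real

noncomputable def gpdf (t : ℝ) : ℝ := (Real.sqrt (2 * Real.pi))⁻¹ * Real.exp (-t ^ 2 / 2)

lemma gpdf_eq (t : ℝ) : gpdf t = (Real.sqrt (2 * Real.pi))⁻¹ * Real.exp (-(1/2) * t ^ 2) := by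
  unfold gpdf; ring_nf

lemma gpdf_pos (t : ℝ) : 0 < gpdf t := by
  unfold gpdf
  positivity

lemma integrable_gpdf : Integrable gpdf := by
  have := (integrable_exp_neg_mul_sq (b := (1/2:ℝ)) (by norm_num)).const_mul
    (Real.sqrt (2 * Real.pi))⁻¹
  convert this using 2 with t
  rw [gpdf_eq]

lemma integral_gpdf : ∫ t, gpdf t = 1 := by
  have h := integral_gaussian (1/2 : ℝ)
  have : ∫ t, gpdf t = (Real.sqrt (2 * Real.pi))⁻¹ * ∫ t : ℝ, Real.exp (-(1/2) * t ^ 2) := by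
    rw [← integral_const_mul]
    congr 1 with t
    exact gpdf_eq t
  rw [this, h]
  rw [show (π / (1/2 : ℝ)) = 2 * π by ring]
  rw [inv_mul_cancel₀]
  positivity

noncomputable def Q (x : ℝ) : ℝ := ∫ t in Set.Ioi x, gpdf t

lemma Phi_eq (z : ℝ) : Phi z = ∫ t in Set.Iic z, gpdf t := rfl

lemma Phi_add_Q (x : ℝ) : Phi x + Q x = 1 := by
  rw [Phi_eq, Q, intervalIntegral.integral_Iic_add_Ioi integrable_gpdf.integrableOn
    integrable_gpdf.integrableOn, integral_gpdf]

lemma Phi_strictMono : StrictMono Phi := by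
  intro a b hab
  have key : 0 < ∫ t in Set.Ioc a b, gpdf t := by
    refine (setIntegral_pos_iff_support_of_nonneg_ae
      (Filter.Eventually.of_forall fun t => (gpdf_pos t).le) integrable_gpdf.integrableOn).2 ?_
    have hsupp : Function.support gpdf = Set.univ := by
      ext t; simp [Function.mem_support, (gpdf_pos t).ne']
    rw [hsupp, Set.univ_inter, Real.volume_Ioc]
    simpa using hab
  have h1 : Phi b = Phi a + ∫ t in Set.Ioc a b, gpdf t := by
    rw [Phi_eq, Phi_eq, ← setIntegral_union (Iic_disjoint_Ioc le_rfl) measurableSet_Ioc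
      integrable_gpdf.integrableOn integrable_gpdf.integrableOn, Iic_union_Ioc_eq_Iic hab.le]
  linarith

lemma hasDerivAt_expsq (t : ℝ) :
    HasDerivAt (fun t : ℝ => Real.exp (-t ^ 2 / 2)) (Real.exp (-t ^ 2 / 2) * (-t)) t := by
  have h : HasDerivAt (fun t : ℝ => -t ^ 2 / 2) (-t) t := by
    have := ((hasDerivAt_pow 2 t).neg).div_const 2
    refine this.congr_deriv ?_
    ring
  exact h.exp

lemma tendsto_expsq : Tendsto (fun t : ℝ => Real.exp (-t ^ 2 / 2)) atTop (nhds 0) := by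
  apply Real.tendsto_exp_atBot.comp
  apply Filter.Tendsto.atBot_div_const (by norm_num)
  exact tendsto_neg_atBot_iff.2 (tendsto_pow_atTop (by norm_num))

lemma integrable_mul_expsq : Integrable (fun t : ℝ => t * Real.exp (-t ^ 2 / 2)) := by
  have := integrable_mul_exp_neg_mul_sq (b := (1/2:ℝ)) (by norm_num)
  convert this using 2 with t
  ring_nf

lemma integral_Ioi_mul_expsq (x : ℝ) :
    ∫ t in Set.Ioi x, t * Real.exp (-t ^ 2 / 2) = Real.exp (-x ^ 2 / 2) := by
  have h := integral_Ioi_of_hasDerivAt_of_tendsto'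
    (f := fun t : ℝ => -Real.exp (-t ^ 2 / 2)) (f' := fun t : ℝ => t * Real.exp (-t ^ 2 / 2))
    (a := x) (m := 0) ?_ integrable_mul_expsq.integrableOn ?_
  · rw [h]; ring
  · intro y _
    have := (hasDerivAt_expsq y).neg
    refine this.congr_deriv ?_
    ring
  · simpa using tendsto_expsq.neg

lemma Q_le {x : ℝ} (hx : 0 < x) :
    Q x ≤ (Real.sqrt (2 * Real.pi))⁻¹ * Real.exp (-x ^ 2 / 2) / x := by
  have hmono : Q x ≤ ∫ t in Set.Ioi x,
      (Real.sqrt (2 * Real.pi))⁻¹ / x * (t * Real.exp (-t ^ 2 / 2)) := by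
    refine setIntegral_mono_on integrable_gpdf.integrableOn
      ((integrable_mul_expsq.const_mul _).integrableOn) measurableSet_Ioi ?_
    intro t ht
    have htx : x ≤ t := (Set.mem_Ioi.1 ht).le
    have h1 : (1:ℝ) ≤ t / x := (one_le_div hx).2 htx
    unfold gpdf
    have hc : (0:ℝ) < (Real.sqrt (2 * Real.pi))⁻¹ := by positivity
    calc (Real.sqrt (2 * Real.pi))⁻¹ * Real.exp (-t ^ 2 / 2)
        ≤ (t / x) * ((Real.sqrt (2 * Real.pi))⁻¹ * Real.exp (-t ^ 2 / 2)) := by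
          nlinarith [mul_pos hc (Real.exp_pos (-t^2/2))]
      _ = (Real.sqrt (2 * Real.pi))⁻¹ / x * (t * Real.exp (-t ^ 2 / 2)) := by
          ring
  rw [integral_const_mul, integral_Ioi_mul_expsq] at hmono
  calc Q x ≤ _ := hmono
    _ = (Real.sqrt (2 * Real.pi))⁻¹ * Real.exp (-x ^ 2 / 2) / x := by ring

noncomputable def Dd (t : ℝ) : ℝ :=
  Real.exp (-t ^ 2 / 2) * (t ^ 4 + 2 * t ^ 2 - 1) / (1 + t ^ 2) ^ 2

lemma denom_ne (t : ℝ) : (1 + t ^ 2) ≠ 0 := by positivity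

lemma hasDerivAt_negg (t : ℝ) :
    HasDerivAt (fun t : ℝ => -(t / (1 + t ^ 2) * Real.exp (-t ^ 2 / 2))) (Dd t) t := by
  have h1 : HasDerivAt (fun t : ℝ => t / (1 + t ^ 2)) ((1 - t ^ 2) / (1 + t ^ 2) ^ 2) t := by
    have hd : HasDerivAt (fun t : ℝ => 1 + t ^ 2) (2 * t) t := by
      simpa using (hasDerivAt_pow 2 t).const_add 1
    have := (hasDerivAt_id t).div hd (denom_ne t)
    refine this.congr_deriv ?_
    simp only [id]
    ring
  have h := (h1.mul (hasDerivAt_expsq t)).neg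
  refine h.congr_deriv ?_
  unfold Dd
  field_simp
  ring

lemma Dd_le (t : ℝ) : Dd t ≤ Real.exp (-t ^ 2 / 2) := by
  unfold Dd
  rw [div_le_iff₀ (by positivity)]
  nlinarith [Real.exp_pos (-t^2/2), sq_nonneg t, sq_nonneg (t^2)]

lemma Dd_abs_le (t : ℝ) : |Dd t| ≤ Real.exp (-t ^ 2 / 2) := by
  rw [abs_le]
  refine ⟨?_, Dd_le t⟩
  unfold Dd
  rw [le_div_iff₀ (by positivity)]
  nlinarith [Real.exp_pos (-t^2/2), sq_nonneg t, sq_nonneg (t^2), sq_nonneg (1+t^2)]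

lemma integrable_expsq : Integrable (fun t : ℝ => Real.exp (-t ^ 2 / 2)) := by
  have := integrable_exp_neg_mul_sq (b := (1/2:ℝ)) (by norm_num)
  convert this using 2 with t
  ring_nf

lemma continuous_Dd : Continuous Dd := by
  unfold Dd
  fun_prop (disch := intro t; positivity)

lemma integrable_Dd : Integrable Dd :=
  integrable_expsq.mono continuous_Dd.aestronglyMeasurable
    (Filter.Eventually.of_forall fun t => by
      rw [Real.norm_eq_abs, Real.norm_eq_abs, abs_of_pos (Real.exp_pos _)]
      exact Dd_abs_le t)

lemma tendsto_g : Tendsto (fun t : ℝ => -(t / (1 + t ^ 2) * Real.exp (-t ^ 2 / 2))) atTop (nhds 0) := by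
  rw [show (0:ℝ) = -0 by norm_num]
  apply Filter.Tendsto.neg
  apply squeeze_zero' (g := fun t : ℝ => Real.exp (-t ^ 2 / 2))
  · filter_upwards [eventually_ge_atTop (0:ℝ)] with t ht
    positivity
  · filter_upwards [eventually_ge_atTop (0:ℝ)] with t ht
    have h1 : t / (1 + t ^ 2) ≤ 1 := by
      rw [div_le_one (by positivity)]
      nlinarith
    nlinarith [Real.exp_pos (-t^2/2), div_nonneg ht (by positivity : (0:ℝ) ≤ 1 + t^2)]
  · exact tendsto_expsq

lemma integral_Ioi_Dd (x : ℝ) :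
    ∫ t in Set.Ioi x, Dd t = x / (1 + x ^ 2) * Real.exp (-x ^ 2 / 2) := by
  have h := integral_Ioi_of_hasDerivAt_of_tendsto'
    (f := fun t : ℝ => -(t / (1 + t ^ 2) * Real.exp (-t ^ 2 / 2))) (f' := Dd)
    (a := x) (m := 0) (fun y _ => hasDerivAt_negg y) integrable_Dd.integrableOn tendsto_g
  rw [h]; ring

lemma le_Q {x : ℝ} (hx : 0 < x) :
    (Real.sqrt (2 * Real.pi))⁻¹ * Real.exp (-x ^ 2 / 2) * (x / (1 + x ^ 2)) ≤ Q x := by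
  have hmono : (∫ t in Set.Ioi x, (Real.sqrt (2 * Real.pi))⁻¹ * Dd t) ≤ Q x := by
    refine setIntegral_mono_on ((integrable_Dd.const_mul _).integrableOn)
      integrable_gpdf.integrableOn measurableSet_Ioi ?_
    intro t ht
    unfold gpdf
    have hc : (0:ℝ) < (Real.sqrt (2 * Real.pi))⁻¹ := by positivity
    exact mul_le_mul_of_nonneg_left (Dd_le t) hc.le
  rw [integral_const_mul, integral_Ioi_Dd] at hmono
  calc (Real.sqrt (2 * Real.pi))⁻¹ * Real.exp (-x ^ 2 / 2) * (x / (1 + x ^ 2))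
      = (Real.sqrt (2 * Real.pi))⁻¹ * (x / (1 + x ^ 2) * Real.exp (-x ^ 2 / 2)) := by ring
    _ ≤ Q x := hmono

lemma exp_four_le : Real.exp 4 ≤ 100 := by
  have h := Real.exp_one_lt_d9
  have he : Real.exp 4 = (Real.exp 1) ^ (4:ℕ) := by
    rw [← Real.exp_nat_mul]; norm_num
  have h2 : (Real.exp 1) ^ (4:ℕ) ≤ (2.7182818286:ℝ) ^ (4:ℕ) :=
    pow_le_pow_left₀ (Real.exp_pos 1).le h.le 4
  rw [he]
  calc (Real.exp 1) ^ (4:ℕ) ≤ (2.7182818286:ℝ) ^ (4:ℕ) := h2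
    _ ≤ 100 := by norm_num

lemma sixteen_le_exp_four : (16:ℝ) ≤ Real.exp 4 := by
  have h := Real.exp_one_gt_d9
  have he : Real.exp 4 = (Real.exp 1) ^ (4:ℕ) := by
    rw [← Real.exp_nat_mul]; norm_num
  have h2 : ((2:ℝ)) ^ (4:ℕ) ≤ (Real.exp 1) ^ (4:ℕ) :=
    pow_le_pow_left₀ (by norm_num) (by nlinarith) 4
  rw [he]; calc (16:ℝ) = (2:ℝ)^(4:ℕ) := by norm_num
    _ ≤ _ := h2

lemma log_four_pi_le : Real.log (4 * Real.pi) ≤ 4 := by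
  rw [Real.log_le_iff_le_exp (by positivity)]
  nlinarith [Real.pi_le_four, sixteen_le_exp_four]

set_option maxHeartbeats 4000000 in
theorem stmt4 (z : ℝ → ℝ) (hz : ∀ α ∈ Set.Ioo (0 : ℝ) 1, Phi (z α) = 1 - α) :
    ∃ C : ℝ, ∀ᶠ α in nhdsWithin 0 (Set.Ioi (0 : ℝ)),
      |z α - Real.sqrt (-2 * Real.log α - Real.log |Real.log α| - Real.log (4 * Real.pi))| ≤
        C * Real.sqrt (-2 * Real.log α - Real.log |Real.log α| - Real.log (4 * Real.pi)) *
          (Real.log |Real.log α| / (Real.log α) ^ 2) := by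
  refine ⟨1, ?_⟩
  have hmem : Set.Ioo (0:ℝ) (Real.exp (-100)) ∈ nhdsWithin 0 (Set.Ioi (0:ℝ)) :=
    Ioo_mem_nhdsGT_of_mem (Set.left_mem_Ico.2 (Real.exp_pos _))
  filter_upwards [hmem] with α hα
  obtain ⟨hα0, hα1⟩ := hα
  -- basic setup
  set u : ℝ := -Real.log α with hu_def
  clear_value u
  have hlogα : Real.log α = -u := by rw [hu_def]; ring
  have hu100 : 100 ≤ u := by
    have := Real.log_lt_log hα0 hα1
    rw [Real.log_exp] at this
    rw [hu_def]; linarith [this]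
  have hu0 : 0 < u := by linarith
  have habs : |Real.log α| = u := by rw [hlogα, abs_neg, abs_of_pos hu0]
  set L : ℝ := Real.log u with hL_def
  clear_value L
  have hL4 : 4 ≤ L := by
    rw [hL_def, Real.le_log_iff_exp_le hu0]
    linarith [exp_four_le]
  have hL0 : 0 < L := by linarith
  have hsqrtu10 : (10:ℝ) ≤ Real.sqrt u := by
    rw [show (10:ℝ) = Real.sqrt 100 by
      rw [show (100:ℝ) = 10^2 by norm_num, Real.sqrt_sq]; norm_num]
    exact Real.sqrt_le_sqrt hu100
  have hsqrtu_sq : Real.sqrt u * Real.sqrt u = u := Real.mul_self_sqrt hu0.le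
  have hLu5 : L ≤ u / 5 := by
    have h1 : Real.log (Real.sqrt u) ≤ Real.sqrt u - 1 :=
      Real.log_le_sub_one_of_pos (by linarith)
    have h2 : Real.log (Real.sqrt u) = Real.log u / 2 := Real.log_sqrt hu0.le
    have h3 : Real.sqrt u ≤ u / 10 := by
      rw [show u / 10 = Real.sqrt ((u/10)^2) by rw [Real.sqrt_sq (by linarith)]]
      exact Real.sqrt_le_sqrt (by nlinarith)
    rw [hL_def]; linarith
  have hl4p : Real.log (4 * Real.pi) ≤ L := le_trans log_four_pi_le hL4
  have hl4p0 : 0 ≤ Real.log (4 * Real.pi) := by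
    apply Real.log_nonneg; nlinarith [Real.pi_gt_three]
  set S : ℝ := 2 * u - L - Real.log (4 * Real.pi) with hS_def
  clear_value S
  have hSu : u ≤ S := by rw [hS_def]; linarith
  have hS2u : S ≤ 2 * u := by rw [hS_def]; linarith
  have hS0 : 0 < S := by linarith
  set s : ℝ := Real.sqrt S with hs_def
  clear_value s
  have hs_sq : s ^ 2 = S := hs_def ▸ Real.sq_sqrt hS0.le
  have hs_lb : Real.sqrt u ≤ s := hs_def ▸ Real.sqrt_le_sqrt hSu
  have hs10 : (10:ℝ) ≤ s := le_trans hsqrtu10 hs_lb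
  have hs0 : 0 < s := by linarith
  have hs_ub : s ≤ Real.sqrt 2 * Real.sqrt u := by
    rw [hs_def, ← Real.sqrt_mul (by norm_num)]
    exact Real.sqrt_le_sqrt hS2u
  have hsqrt2 : (1:ℝ) ≤ Real.sqrt 2 := by
    rw [show (1:ℝ) = Real.sqrt 1 by simp]
    exact Real.sqrt_le_sqrt (by norm_num)
  set ε : ℝ := L / u ^ 2 with hε_def
  clear_value ε
  have hε0 : 0 < ε := by rw [hε_def]; positivity
  have hε_small : ε ≤ 1 / 500 := by
    rw [hε_def, div_le_iff₀ (by positivity)]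
    have h := mul_le_mul_of_nonneg_right hu100 hu0.le
    have hu2 : u ^ 2 = u * u := sq u
    linarith
  -- key identity
  have hkey : (Real.sqrt (2 * Real.pi))⁻¹ * Real.exp (-S / 2) =
      α * (Real.sqrt 2 * Real.sqrt u) := by
    have h1 : Real.exp (-S / 2) = Real.exp (-u) * Real.exp (L / 2) *
        Real.exp (Real.log (4 * Real.pi) / 2) := by
      rw [← Real.exp_add, ← Real.exp_add]
      congr 1
      rw [hS_def]; ring
    have h2 : Real.exp (-u) = α := by
      rw [hu_def, neg_neg, Real.exp_log hα0]
    have h3 : Real.exp (L / 2) = Real.sqrt u := by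
      rw [hL_def, ← Real.log_sqrt hu0.le, Real.exp_log (by positivity)]
    have h4 : Real.exp (Real.log (4 * Real.pi) / 2) = Real.sqrt (4 * Real.pi) := by
      rw [← Real.log_sqrt (by positivity), Real.exp_log (by positivity)]
    have h5 : Real.sqrt (4 * Real.pi) = Real.sqrt 2 * Real.sqrt (2 * Real.pi) := by
      rw [← Real.sqrt_mul (by norm_num), show (2:ℝ) * (2 * Real.pi) = 4 * Real.pi by ring]
    have hsp : (0:ℝ) < Real.sqrt (2 * Real.pi) := Real.sqrt_pos.2 (by positivity)
    rw [h1, h2, h3, h4, h5]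
    field_simp
  -- upper bound: Q (s*(1+ε)) ≤ α
  set x₂ : ℝ := s * (1 + ε) with hx2_def
  clear_value x₂
  have hx20 : 0 < x₂ := by rw [hx2_def]; exact mul_pos hs0 (by linarith)
  have hx2_ge : s ≤ x₂ := by
    rw [hx2_def]
    have : s * (1 + ε) = s + s * ε := by ring
    linarith [mul_nonneg hs0.le hε0.le]
  have hexp2 : Real.exp (-x₂ ^ 2 / 2) =
      Real.exp (-S / 2) * Real.exp (-(S * (2 * ε + ε ^ 2)) / 2) := by
    rw [← Real.exp_add]
    congr 1
    have hx2sq : x₂ ^ 2 = S * (1 + ε) ^ 2 := by rw [hx2_def, mul_pow, hs_sq]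
    rw [hx2sq]; ring
  have hE : Real.sqrt 2 * Real.sqrt u * Real.exp (-(S * ε)) ≤ s := by
    have hsq : (Real.sqrt 2 * Real.sqrt u) ^ 2 ≤ (s * Real.exp (S * ε)) ^ 2 := by
      have hEe : 1 + S * ε ≤ Real.exp (S * ε) := by
        have := Real.add_one_le_exp (S * ε); linarith
      have h2u : (Real.sqrt 2 * Real.sqrt u) ^ 2 = 2 * u := by
        rw [mul_pow, Real.sq_sqrt (by norm_num : (0:ℝ) ≤ 2), Real.sq_sqrt hu0.le]
      rw [h2u, mul_pow, hs_sq]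
      have hS2 : u ^ 2 ≤ S ^ 2 := pow_le_pow_left₀ hu0.le hSu 2
      have hεu : u ^ 2 * ε = L := by rw [hε_def]; field_simp
      have e1 : (1 + S * ε) ^ 2 ≤ (Real.exp (S * ε)) ^ 2 :=
        pow_le_pow_left₀ (by positivity) hEe 2
      have e2 : 1 + 2 * (S * ε) ≤ (1 + S * ε) ^ 2 := by
        have : (1 + S * ε) ^ 2 = 1 + 2 * (S * ε) + (S * ε) ^ 2 := by ring
        linarith [sq_nonneg (S * ε)]
      have e3 : 0 ≤ (S ^ 2 - u ^ 2) * ε := mul_nonneg (by linarith) hε0.le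
      have e4 : S * (1 + 2 * (S * ε)) ≤ S * (Real.exp (S * ε)) ^ 2 :=
        mul_le_mul_of_nonneg_left (le_trans e2 e1) hS0.le
      have e5 : 2 * u ≤ S * (1 + 2 * (S * ε)) := by
        have er : S * (1 + 2 * (S * ε)) = S + 2 * ((S ^ 2 - u ^ 2) * ε) + 2 * (u ^ 2 * ε) := by
          ring
        rw [er, hεu]
        linarith [hS_def, e3, hl4p]
      linarith
    have h := Real.sqrt_le_sqrt hsq
    rw [Real.sqrt_sq (by positivity), Real.sqrt_sq (by positivity)] at h
    calc Real.sqrt 2 * Real.sqrt u * Real.exp (-(S * ε))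
        ≤ s * Real.exp (S * ε) * Real.exp (-(S * ε)) := by
          apply mul_le_mul_of_nonneg_right h (Real.exp_pos _).le
      _ = s := by rw [mul_assoc, ← Real.exp_add]; simp
  have hup : Q x₂ ≤ α := by
    have h1 := Q_le hx20
    have h2 : (Real.sqrt (2 * Real.pi))⁻¹ * Real.exp (-x₂ ^ 2 / 2) =
        α * (Real.sqrt 2 * Real.sqrt u) * Real.exp (-(S * (2 * ε + ε ^ 2)) / 2) := by
      rw [hexp2, ← mul_assoc, hkey]
    have h3 : Real.exp (-(S * (2 * ε + ε ^ 2)) / 2) ≤ Real.exp (-(S * ε)) := by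
      apply Real.exp_le_exp.2
      have : S * (2 * ε + ε ^ 2) = 2 * (S * ε) + S * ε ^ 2 := by ring
      linarith [mul_nonneg hS0.le (sq_nonneg ε)]
    have h4 : α * (Real.sqrt 2 * Real.sqrt u) * Real.exp (-(S * (2 * ε + ε ^ 2)) / 2) ≤
        α * x₂ := by
      calc α * (Real.sqrt 2 * Real.sqrt u) * Real.exp (-(S * (2 * ε + ε ^ 2)) / 2)
          ≤ α * (Real.sqrt 2 * Real.sqrt u) * Real.exp (-(S * ε)) := by
            apply mul_le_mul_of_nonneg_left h3
            positivity
        _ = α * (Real.sqrt 2 * Real.sqrt u * Real.exp (-(S * ε))) := by ring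
        _ ≤ α * s := mul_le_mul_of_nonneg_left hE hα0.le
        _ ≤ α * x₂ := mul_le_mul_of_nonneg_left hx2_ge hα0.le
    calc Q x₂ ≤ (Real.sqrt (2 * Real.pi))⁻¹ * Real.exp (-x₂ ^ 2 / 2) / x₂ := h1
      _ = α * (Real.sqrt 2 * Real.sqrt u) * Real.exp (-(S * (2 * ε + ε ^ 2)) / 2) / x₂ := by
          rw [h2]
      _ ≤ α * x₂ / x₂ := (div_le_div_iff_of_pos_right hx20).2 h4
      _ = α := by field_simp
  -- lower bound: α ≤ Q (s*(1-ε))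
  set x₁ : ℝ := s * (1 - ε) with hx1_def
  clear_value x₁
  have hx10 : 0 < x₁ := by
    rw [hx1_def]; exact mul_pos hs0 (by linarith)
  have hx1_le : x₁ ≤ s := by
    rw [hx1_def]
    have : s * (1 - ε) = s - s * ε := by ring
    linarith [mul_nonneg hs0.le hε0.le]
  have hx1_lb : Real.sqrt u / 2 ≤ x₁ := by
    rw [hx1_def]
    have h1 : Real.sqrt u * (1 / 2) ≤ s * (1 - ε) :=
      mul_le_mul hs_lb (by linarith) (by norm_num) hs0.le
    linarith
  have hx1_ub : x₁ ≤ Real.sqrt 2 * Real.sqrt u := le_trans hx1_le hs_ub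
  set F : ℝ := Real.exp (S * (2 * ε - ε ^ 2) / 2) with hF_def
  clear_value F
  have hFge : 1 + L / (2 * u) ≤ F := by
    have h1 : 1 + S * (2 * ε - ε ^ 2) / 2 ≤ F := by
      have := Real.add_one_le_exp (S * (2 * ε - ε ^ 2) / 2); rw [hF_def]; linarith
    have h2 : u * ε / 2 ≤ S * (2 * ε - ε ^ 2) / 2 := by
      have q1 : 0 ≤ (S - u) * ε := mul_nonneg (by linarith) hε0.le
      have q2 : 0 ≤ S * ε * (1 - ε) := mul_nonneg (mul_nonneg hS0.le hε0.le) (by linarith)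
      have q3 : S * (2 * ε - ε ^ 2) = S * ε + S * ε * (1 - ε) := by ring
      have q4 : (S - u) * ε = S * ε - u * ε := by ring
      linarith
    have h3 : u * ε / 2 = L / (2 * u) := by rw [hε_def]; field_simp
    linarith
  have hexp1 : (Real.sqrt (2 * Real.pi))⁻¹ * Real.exp (-x₁ ^ 2 / 2) =
      α * (Real.sqrt 2 * Real.sqrt u) * F := by
    have hx1sq : x₁ ^ 2 = S * (1 - ε) ^ 2 := by rw [hx1_def, mul_pow, hs_sq]
    have : Real.exp (-x₁ ^ 2 / 2) = Real.exp (-S / 2) * F := by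
      rw [hF_def, ← Real.exp_add]
      congr 1
      rw [hx1sq]; ring
    rw [this, ← mul_assoc, hkey]
  have hkey2 : 1 + x₁ ^ 2 ≤ Real.sqrt 2 * Real.sqrt u * F * x₁ := by
    set A : ℝ := Real.sqrt 2 * Real.sqrt u with hA_def
    clear_value A
    have hA0 : 0 < A := by rw [hA_def]; positivity
    have h1 : x₁ ^ 2 ≤ A * x₁ := by
      have := mul_le_mul_of_nonneg_right hx1_ub hx10.le
      have hx1sq : x₁ ^ 2 = x₁ * x₁ := sq x₁
      linarith
    have hAu : Real.sqrt u ≤ A := by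
      rw [hA_def]
      have := mul_le_mul_of_nonneg_right hsqrt2 (Real.sqrt_nonneg u)
      linarith
    have h2 : (1:ℝ) ≤ A * x₁ * L / (2 * u) := by
      rw [le_div_iff₀ (by positivity)]
      have p1 : Real.sqrt u * (Real.sqrt u / 2) ≤ A * x₁ :=
        mul_le_mul hAu hx1_lb (by positivity) hA0.le
      have p2 : Real.sqrt u * (Real.sqrt u / 2) = u / 2 := by
        rw [show Real.sqrt u * (Real.sqrt u / 2) = Real.sqrt u * Real.sqrt u / 2 from by ring,
          hsqrtu_sq]
      rw [p2] at p1
      have p3 : u / 2 * 4 ≤ A * x₁ * L :=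
        mul_le_mul p1 hL4 (by norm_num) (by positivity)
      linarith
    have h3 : A * x₁ * (1 + L / (2 * u)) ≤ A * F * x₁ := by
      have := mul_le_mul_of_nonneg_left hFge (by positivity : (0:ℝ) ≤ A * x₁)
      calc A * x₁ * (1 + L / (2 * u)) ≤ A * x₁ * F := this
        _ = A * F * x₁ := by ring
    have h4 : A * x₁ * (1 + L / (2 * u)) = A * x₁ + A * x₁ * L / (2 * u) := by ring
    linarith
  have hlow : α ≤ Q x₁ := by
    have h5 := le_Q hx10
    have hd : (0:ℝ) < 1 + x₁ ^ 2 := by positivity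
    calc α = α * (1 + x₁ ^ 2) / (1 + x₁ ^ 2) := by field_simp
      _ ≤ α * (Real.sqrt 2 * Real.sqrt u * F * x₁) / (1 + x₁ ^ 2) :=
          (div_le_div_iff_of_pos_right hd).2 (mul_le_mul_of_nonneg_left hkey2 hα0.le)
      _ = (Real.sqrt (2 * Real.pi))⁻¹ * Real.exp (-x₁ ^ 2 / 2) * (x₁ / (1 + x₁ ^ 2)) := by
          rw [hexp1]; ring
      _ ≤ Q x₁ := h5
  -- conclude
  have hα1' : α < 1 := lt_trans hα1 (Real.exp_lt_one_iff.mpr (by norm_num))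
  have hzα := hz α ⟨hα0, hα1'⟩
  have hp1 := Phi_add_Q x₁
  have hp2 := Phi_add_Q x₂
  have hle1 : x₁ ≤ z α := by
    have : Phi x₁ ≤ Phi (z α) := by rw [hzα]; linarith
    exact Phi_strictMono.le_iff_le.1 this
  have hle2 : z α ≤ x₂ := by
    have : Phi (z α) ≤ Phi x₂ := by rw [hzα]; linarith
    exact Phi_strictMono.le_iff_le.1 this
  have hSrw : -2 * Real.log α - Real.log |Real.log α| - Real.log (4 * Real.pi) = S := by
    rw [habs, hlogα, hS_def, hL_def]; ring
  rw [hSrw, habs, hlogα, ← hs_def, neg_sq, ← hL_def, ← hε_def]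
  have habs_le : |z α - s| ≤ s * ε := by
    rw [abs_le]
    constructor
    · rw [hx1_def] at hle1
      have : s * (1 - ε) = s - s * ε := by ring
      linarith
    · rw [hx2_def] at hle2
      have : s * (1 + ε) = s + s * ε := by ring
      linarith
  calc |z α - s| ≤ s * ε := habs_le
    _ = 1 * s * ε := by ring
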